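/- Let d ∈ ℕ, let U be a real normed vector space, let O ⊆ ℝ^d (with the Euclidean inner product and standard orthonormal basis e₁, …, e_d) be an open set, let O^ℝ = {(y, p) ∈ O × ℝ : y + p e_i ∈ O for all i ∈ {1, …, d}}, let X : O → U and Z : O^ℝ → (ℝ^d →L U) be functions, let x ∈ O and r ∈ (0, ∞) satisfy {y ∈ ℝ^d : ‖y − x‖ < 2r} ⊆ O. Assume that Z is continuous at the point (x, 0) and that for all (y, p) ∈ O × ℝ with ‖y − x‖² + p² < r² and all i ∈ {1, …, d} it holds that X(y + p e_i) − X(y) = p · Z(y, p) e_i. Then X is Fréchet differentiable at x and its Fréchet derivative at x equals Z(x, 0). -/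

import Mathlib

open scoped BigOperators RealInnerProductSpace

private theorem coordsum' (d : ℕ) (h : EuclideanSpace ℝ (Fin d)) (s : Finset (Fin d)) (i : Fin d) :
    (∑ j ∈ s, h j • EuclideanSpace.single j (1:ℝ)) i = if i ∈ s then h i else 0 := by
  induction s using Finset.induction with
  | empty => rfl
  | @insert j s hj ih =>
      rw [Finset.sum_insert hj]
      rcases eq_or_ne i j with rfl | hij <;>
        simp_all [PiLp.add_apply, PiLp.smul_apply, EuclideanSpace.single_apply]

private theorem normsq' (d : ℕ) (v : EuclideanSpace ℝ (Fin d)) : ‖v‖ ^ 2 = ∑ i, v i ^ 2 := by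
  rw [EuclideanSpace.norm_eq, Real.sq_sqrt (by positivity)]
  simp [sq_abs]

private theorem sumrepr' (d : ℕ) (h : EuclideanSpace ℝ (Fin d)) :
    ∑ j, h j • EuclideanSpace.single j (1:ℝ) = h := by
  ext i; rw [coordsum']; simp

/-- The deterministic core of Lemma 2.1 of the paper: if `X : O → U` and
`Z : O^ℝ → (ℝ^d →L U)` satisfy the difference-quotient relation
`X(y + p eᵢ) − X(y) = p · Z(y, p) eᵢ` for all `(y, p)` with `‖y − x‖² + p² < r²`
and all coordinate directions `eᵢ`, where the ball of radius `2r` around `x` is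
contained in `O`, and `Z` is continuous at `(x, 0)` (within `O^ℝ`), then `X` is
Fréchet differentiable at `x` with derivative `Z(x, 0)`. -/
theorem hasFDerivAt_of_difference_quotients
    (d : ℕ) {U : Type*} [NormedAddCommGroup U] [NormedSpace ℝ U]
    (O : Set (EuclideanSpace ℝ (Fin d))) (hO : IsOpen O)
    (X : EuclideanSpace ℝ (Fin d) → U)
    (Z : EuclideanSpace ℝ (Fin d) × ℝ → (EuclideanSpace ℝ (Fin d) →L[ℝ] U))
    (x : EuclideanSpace ℝ (Fin d)) (hx : x ∈ O)
    (r : ℝ) (hr : 0 < r)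
    (hball : {y : EuclideanSpace ℝ (Fin d) | ‖y - x‖ < 2 * r} ⊆ O)
    (hZcont : ContinuousWithinAt Z
      {q : EuclideanSpace ℝ (Fin d) × ℝ | q.1 ∈ O ∧
        ∀ i : Fin d, q.1 + q.2 • EuclideanSpace.single i (1 : ℝ) ∈ O} (x, 0))
    (hdq : ∀ (y : EuclideanSpace ℝ (Fin d)) (p : ℝ), ‖y - x‖ ^ 2 + p ^ 2 < r ^ 2 →
      ∀ i : Fin d,
        X (y + p • EuclideanSpace.single i (1 : ℝ)) - X y
          = p • Z (y, p) (EuclideanSpace.single i (1 : ℝ))) :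
    HasFDerivAt X (Z (x, 0)) x := by
  rw [hasFDerivAt_iff_isLittleO_nhds_zero, Asymptotics.isLittleO_iff]
  intro c hc
  set ε : ℝ := c / (d + 1) with hε_def
  have hε : 0 < ε := by positivity
  obtain ⟨δ, hδ, hδ'⟩ := Metric.continuousWithinAt_iff.mp hZcont ε hε
  filter_upwards [Metric.ball_mem_nhds (0 : EuclideanSpace ℝ (Fin d)) (lt_min hδ hr)] with h hh
  rw [Metric.mem_ball, dist_zero_right, lt_min_iff] at hh
  obtain ⟨hhδ, hhr⟩ := hh
  have hh0 : (0:ℝ) ≤ ‖h‖ := norm_nonneg _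
  -- partial sums
  set Y : ℕ → EuclideanSpace ℝ (Fin d) := fun n =>
    x + ∑ j ∈ Finset.univ.filter (fun j : Fin d => (j:ℕ) < n), h j • EuclideanSpace.single j 1
    with hY_def
  have hY0 : Y 0 = x := by simp [hY_def]
  have hYd : Y d = x + h := by
    have : Finset.univ.filter (fun j : Fin d => (j:ℕ) < d) = Finset.univ := by
      ext j; simp [j.isLt]
    simp [hY_def, this, sumrepr']
  -- norm of partial sums
  have hYnorm : ∀ n : ℕ, ‖Y n - x‖ ^ 2
      = ∑ j ∈ Finset.univ.filter (fun j : Fin d => (j:ℕ) < n), h j ^ 2 := by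
    intro n
    rw [hY_def]
    simp only [add_sub_cancel_left]
    rw [normsq']
    rw [← Finset.sum_filter_add_sum_filter_not Finset.univ (fun j : Fin d => (j:ℕ) < n)
      (fun i => (∑ j ∈ Finset.univ.filter (fun j : Fin d => (j:ℕ) < n),
        h j • EuclideanSpace.single j (1:ℝ)) i ^ 2)]
    have h1 : ∀ i ∈ Finset.univ.filter (fun j : Fin d => (j:ℕ) < n),
        (∑ j ∈ Finset.univ.filter (fun j : Fin d => (j:ℕ) < n),
          h j • EuclideanSpace.single j (1:ℝ)) i ^ 2 = h i ^ 2 := by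
      intro i hi; rw [coordsum', if_pos hi]
    have h2 : ∀ i ∈ Finset.univ.filter (fun j : Fin d => ¬ (j:ℕ) < n),
        (∑ j ∈ Finset.univ.filter (fun j : Fin d => (j:ℕ) < n),
          h j • EuclideanSpace.single j (1:ℝ)) i ^ 2 = 0 := by
      intro i hi
      rw [coordsum', if_neg (by simpa using (Finset.mem_filter.mp hi).2)]
      ring
    rw [Finset.sum_congr rfl h1, Finset.sum_congr rfl h2]
    simp
  have hhsq : ‖h‖ ^ 2 = ∑ j, h j ^ 2 := normsq' d h
  have hYle : ∀ n : ℕ, ‖Y n - x‖ ≤ ‖h‖ := by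
    intro n
    have : ‖Y n - x‖ ^ 2 ≤ ‖h‖ ^ 2 := by
      rw [hYnorm, hhsq]
      exact Finset.sum_le_sum_of_subset_of_nonneg (Finset.filter_subset _ _)
        (fun j _ _ => sq_nonneg _)
    exact (abs_le_of_sq_le_sq' this hh0).2
  have hcoord : ∀ i : Fin d, |h i| ≤ ‖h‖ := by
    intro i
    have : h i ^ 2 ≤ ‖h‖ ^ 2 := by
      rw [hhsq]
      exact Finset.single_le_sum (fun j _ => sq_nonneg (h j)) (Finset.mem_univ i)
    have := (abs_le_of_sq_le_sq' this hh0)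
    exact abs_le.mpr this
  -- the step identity
  have hstep : ∀ i : Fin d, Y ((i:ℕ) + 1) = Y i + h i • EuclideanSpace.single i 1 := by
    intro i
    have hfil : Finset.univ.filter (fun j : Fin d => (j:ℕ) < (i:ℕ) + 1)
        = insert i (Finset.univ.filter (fun j : Fin d => (j:ℕ) < (i:ℕ))) := by
      ext j
      simp [Nat.lt_succ_iff_lt_or_eq, Fin.ext_iff, or_comm]
      rw [Fin.le_iff_val_le_val, Fin.lt_iff_val_lt_val]; omega
    have hnot : i ∉ Finset.univ.filter (fun j : Fin d => (j:ℕ) < (i:ℕ)) := by simp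
    rw [hY_def]
    simp only [hfil, Finset.sum_insert hnot]
    abel
  -- quantitative hypothesis at each step
  have hsq : ∀ i : Fin d, ‖Y i - x‖ ^ 2 + (h i) ^ 2 < r ^ 2 := by
    intro i
    have hnot : i ∉ Finset.univ.filter (fun j : Fin d => (j:ℕ) < (i:ℕ)) := by simp
    have : ‖Y i - x‖ ^ 2 + h i ^ 2 ≤ ‖h‖ ^ 2 := by
      rw [hYnorm, hhsq, add_comm]
      have heq : h i ^ 2 + ∑ j ∈ Finset.univ.filter (fun j : Fin d => (j:ℕ) < (i:ℕ)), h j ^ 2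
          = ∑ j ∈ insert i (Finset.univ.filter (fun j : Fin d => (j:ℕ) < (i:ℕ))), h j ^ 2 :=
        (Finset.sum_insert (f := fun j : Fin d => h j ^ 2) hnot).symm
      rw [heq]
      exact Finset.sum_le_sum_of_subset_of_nonneg (Finset.subset_univ _)
        (fun j _ _ => sq_nonneg _)
    calc ‖Y i - x‖ ^ 2 + h i ^ 2 ≤ ‖h‖ ^ 2 := this
      _ < r ^ 2 := by
          have := mul_self_lt_mul_self hh0 hhr
          simpa [pow_two] using this
  -- each step point is in the set and δ-close
  have hZclose : ∀ i : Fin d, ‖Z (Y i, h i) - Z (x, 0)‖ < ε := by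
    intro i
    have hmem : ((Y (i:ℕ), h i) : EuclideanSpace ℝ (Fin d) × ℝ) ∈
        {q : EuclideanSpace ℝ (Fin d) × ℝ | q.1 ∈ O ∧
          ∀ j : Fin d, q.1 + q.2 • EuclideanSpace.single j (1 : ℝ) ∈ O} := by
      constructor
      · exact hball (by
          simp only [Set.mem_setOf_eq]
          calc ‖Y (i:ℕ) - x‖ ≤ ‖h‖ := hYle _
            _ < r := hhr
            _ < 2 * r := by linarith)
      · intro j
        refine hball ?_
        simp only [Set.mem_setOf_eq]
        have : ‖Y (i:ℕ) + h i • EuclideanSpace.single j (1:ℝ) - x‖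
            ≤ ‖Y (i:ℕ) - x‖ + ‖h i • EuclideanSpace.single j (1:ℝ)‖ := by
          have := norm_add_le (Y (i:ℕ) - x) (h i • EuclideanSpace.single j (1:ℝ))
          simpa [add_sub_right_comm] using this
        have h2 : ‖h i • EuclideanSpace.single j (1:ℝ)‖ = |h i| := by
          rw [norm_smul]; simp
        calc ‖Y (i:ℕ) + h i • EuclideanSpace.single j (1:ℝ) - x‖
            ≤ ‖Y (i:ℕ) - x‖ + |h i| := by rw [← h2]; exact this
          _ ≤ ‖h‖ + ‖h‖ := add_le_add (hYle _) (hcoord i)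
          _ < 2 * r := by linarith
    have hdist : dist ((Y (i:ℕ), h i) : EuclideanSpace ℝ (Fin d) × ℝ) (x, 0) < δ := by
      rw [Prod.dist_eq]
      simp only [dist_eq_norm, sub_zero]
      exact lt_of_le_of_lt (max_le ((hYle _).trans (le_refl _))
        (by simpa [Real.norm_eq_abs] using hcoord i)) hhδ
    have := hδ' hmem hdist
    rwa [dist_eq_norm] at this
  -- telescoping
  have tel : X (x + h) - X x = ∑ k ∈ Finset.range d, (X (Y (k+1)) - X (Y k)) := by
    rw [Finset.sum_range_sub (fun n => X (Y n)), hY0, hYd]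
  have tel2 : X (x + h) - X x = ∑ i : Fin d, (h i) • Z (Y i, h i) (EuclideanSpace.single i 1) := by
    rw [tel, ← Fin.sum_univ_eq_sum_range (fun k => X (Y (k+1)) - X (Y k)) d]
    refine Finset.sum_congr rfl fun i _ => ?_
    rw [hstep i]
    simpa using hdq (Y i) (h i) (hsq i) i
  have hZh : Z (x, 0) h = ∑ i : Fin d, (h i) • Z (x, 0) (EuclideanSpace.single i 1) := by
    conv_lhs => rw [← sumrepr' d h]
    rw [map_sum]
    simp
  rw [tel2, hZh, ← Finset.sum_sub_distrib]
  calc ‖∑ i : Fin d, ((h i) • Z (Y i, h i) (EuclideanSpace.single i 1)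
        - (h i) • Z (x, 0) (EuclideanSpace.single i 1))‖
      ≤ ∑ i : Fin d, ‖(h i) • Z (Y i, h i) (EuclideanSpace.single i 1)
        - (h i) • Z (x, 0) (EuclideanSpace.single i 1)‖ := norm_sum_le _ _
    _ ≤ ∑ _i : Fin d, ε * ‖h‖ := by
        refine Finset.sum_le_sum fun i _ => ?_
        rw [← smul_sub, norm_smul]
        have e1 : ‖(Z (Y i, h i) - Z (x, 0)) (EuclideanSpace.single i (1:ℝ))‖
            ≤ ‖Z (Y i, h i) - Z (x, 0)‖ := by
          have := (Z (Y (i:ℕ), h i) - Z (x, 0)).le_opNorm (EuclideanSpace.single i (1:ℝ))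
          simpa using this
        have e2 : Z (Y (i:ℕ), h i) (EuclideanSpace.single i (1:ℝ))
            - Z (x, 0) (EuclideanSpace.single i (1:ℝ))
            = (Z (Y (i:ℕ), h i) - Z (x, 0)) (EuclideanSpace.single i (1:ℝ)) := rfl
        rw [e2]
        calc ‖h i‖ * ‖(Z (Y (i:ℕ), h i) - Z (x, 0)) (EuclideanSpace.single i (1:ℝ))‖
            ≤ ‖h‖ * ‖Z (Y (i:ℕ), h i) - Z (x, 0)‖ := by
              exact mul_le_mul (by simpa [Real.norm_eq_abs] using hcoord i)
                e1 (norm_nonneg _) hh0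
          _ ≤ ‖h‖ * ε := by
              exact mul_le_mul_of_nonneg_left (le_of_lt (hZclose i)) hh0
          _ = ε * ‖h‖ := mul_comm _ _
    _ = d * ε * ‖h‖ := by simp [mul_assoc]
    _ ≤ c * ‖h‖ := by
        refine mul_le_mul_of_nonneg_right ?_ hh0
        rw [hε_def]
        have hd1 : (0:ℝ) < d + 1 := by positivity
        have : (d:ℝ) * (c / (d + 1)) = d * c / (d + 1) := by ring
        rw [this, div_le_iff₀ hd1]
        nlinarith
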